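/- For every integer ℓ ≥ 1, the number of partitions of 6ℓ−3 into at most 3 parts each of size at most 4ℓ−2 equals the number of partitions of 6ℓ−4 into at most 3 parts each of size at most 4ℓ−2. -/

import Mathlib

/-- `boxPartitions k j n` : the number of partitions of `n` into at most `j` parts,
with each part at most `k`. -/
noncomputable def boxPartitions (k j n : ℕ) : ℕ :=
  Nat.card {π : n.Partition // Multiset.card π.parts ≤ j ∧ ∀ i ∈ π.parts, i ≤ k}

lemma sum_filter_pos (s : Multiset ℕ) : (s.filter (fun x => 0 < x)).sum = s.sum := by
  induction s using Multiset.induction with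
  | empty => simp
  | cons a s ih =>
    by_cases h : 0 < a <;> simp [Multiset.filter_cons, h, ih] <;> omega

def mkP (n b c : ℕ) (h : 2*b + c ≤ n) : n.Partition where
  parts := Multiset.filter (fun x => 0 < x) {n - b - c, b, c}
  parts_pos := fun hx => (Multiset.mem_filter.mp hx).2
  parts_sum := by
    rw [sum_filter_pos]
    simp only [Multiset.insert_eq_cons, Multiset.sum_cons, Multiset.sum_singleton]
    omega

def pairOf : List ℕ → ℕ × ℕ
  | [] => (0,0)
  | [_] => (0,0)
  | [_,y] => (y,0)
  | _ :: y :: x :: _ => (y,x)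

def toPair {n : ℕ} (π : n.Partition) : ℕ × ℕ := pairOf (Multiset.sort π.parts (· ≥ ·))

lemma sort_eq_of (s : Multiset ℕ) (l : List ℕ) (h : (↑l : Multiset ℕ) = s)
    (hs : l.Pairwise (· ≥ ·)) : Multiset.sort s (· ≥ ·) = l := by
  apply List.Perm.eq_of_pairwise' (Multiset.pairwise_sort _ _) hs (Multiset.coe_eq_coe.mp (by rw [Multiset.sort_eq, h]))

lemma toPair_spec {n k : ℕ} (π : n.Partition) (h3 : Multiset.card π.parts ≤ 3)
    (hk : ∀ i ∈ π.parts, i ≤ k) :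
    (toPair π).2 ≤ (toPair π).1 ∧ 2*(toPair π).1 + (toPair π).2 ≤ n ∧
    n ≤ k + (toPair π).1 + (toPair π).2 ∧
    π.parts = Multiset.filter (fun x => 0 < x)
      {n - (toPair π).1 - (toPair π).2, (toPair π).1, (toPair π).2} := by
  have hl : (↑(Multiset.sort π.parts (· ≥ ·)) : Multiset ℕ) = π.parts := Multiset.sort_eq _ _
  have hs : (Multiset.sort π.parts (· ≥ ·)).Pairwise (· ≥ ·) := Multiset.pairwise_sort _ _
  rw [toPair]
  set l := Multiset.sort π.parts (· ≥ ·) with hldef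
  have hlen : l.length ≤ 3 := by
    rw [← Multiset.coe_card, hl]; exact h3
  have hsum : l.sum = n := by
    rw [← Multiset.sum_coe, hl]; exact π.parts_sum
  have hpos : ∀ x ∈ l, 0 < x := by
    intro x hx; exact π.parts_pos (by rw [← hl]; exact_mod_cast hx)
  have hk' : ∀ x ∈ l, x ≤ k := by
    intro x hx; exact hk x (by rw [← hl]; exact_mod_cast hx)
  clear_value l
  rw [← hl]
  clear hl hldef h3 hk
  match l, hs, hlen, hsum, hpos, hk' with
  | [], _, _, hsum, _, _ =>
    simp only [List.sum_nil] at hsum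
    subst hsum
    refine ⟨le_refl _, by simp [pairOf], by simp [pairOf], ?_⟩
    simp [pairOf, Multiset.filter_singleton]
  | [a], _, _, hsum, hpos, hk' =>
    have ha := hpos a (by simp)
    have hak := hk' a (by simp)
    simp only [List.sum_cons, List.sum_nil] at hsum
    simp only [pairOf]
    refine ⟨le_refl _, by omega, by omega, ?_⟩
    have h1 : n - 0 - 0 = a := by omega
    rw [h1]
    rw [show ({a, 0, 0} : Multiset ℕ) = a ::ₘ 0 ::ₘ {0} from rfl]
    rw [Multiset.filter_cons_of_pos _ ha, Multiset.filter_cons_of_neg _ (by simp)]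
    simp [Multiset.filter_singleton]
  | [a,b], hs, _, hsum, hpos, hk' =>
    have ha := hpos a (by simp)
    have hb := hpos b (by simp)
    have hak := hk' a (by simp)
    have hba : b ≤ a := by simpa using hs
    simp only [List.sum_cons, List.sum_nil] at hsum
    simp only [pairOf]
    refine ⟨by omega, by omega, by omega, ?_⟩
    have h1 : n - b - 0 = a := by omega
    rw [h1]
    rw [show ({a, b, 0} : Multiset ℕ) = a ::ₘ b ::ₘ {0} from rfl]
    rw [Multiset.filter_cons_of_pos _ ha, Multiset.filter_cons_of_pos _ hb]
    simp [Multiset.filter_singleton]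
    rfl
  | [a,b,c], hs, _, hsum, hpos, hk' =>
    have ha := hpos a (by simp)
    have hb := hpos b (by simp)
    have hc := hpos c (by simp)
    have hak := hk' a (by simp)
    have hord : b ≤ a ∧ c ≤ b := by
      rw [List.pairwise_cons] at hs
      refine ⟨hs.1 b (by simp), ?_⟩
      rw [List.pairwise_cons] at hs
      exact hs.2.1 c (by simp)
    simp only [List.sum_cons, List.sum_nil] at hsum
    simp only [pairOf]
    refine ⟨by omega, by omega, by omega, ?_⟩
    have h1 : n - b - c = a := by omega
    rw [h1]
    rw [show ({a, b, c} : Multiset ℕ) = a ::ₘ b ::ₘ {c} from rfl]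
    rw [Multiset.filter_cons_of_pos _ ha, Multiset.filter_cons_of_pos _ hb,
      show Multiset.filter (fun x => 0 < x) {c} = {c} from by
        simp [Multiset.filter_singleton, hc]]
    rfl
  | a :: b :: c :: d :: l, _, hlen, _, _, _ => simp at hlen; omega

lemma toPair_mkP (n b c : ℕ) (h : 2*b + c ≤ n) (hcb : c ≤ b) :
    toPair (mkP n b c h) = (b, c) := by
  have hab : b ≤ n - b - c := by omega
  rw [toPair]
  show pairOf (Multiset.sort (Multiset.filter (fun x => 0 < x) {n - b - c, b, c}) _) = (b, c)
  rw [show ({n - b - c, b, c} : Multiset ℕ) = (n-b-c) ::ₘ b ::ₘ {c} from rfl]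
  rcases Nat.eq_zero_or_pos c with hc | hc
  · subst hc
    rcases Nat.eq_zero_or_pos b with hb | hb
    · subst hb
      rcases Nat.eq_zero_or_pos (n - 0 - 0) with ha | ha
      · rw [Multiset.filter_cons_of_neg (p := fun x => 0 < x) _ (by omega), Multiset.filter_cons_of_neg (p := fun x => 0 < x) _ (by simp),
          show Multiset.filter (fun x => 0 < x) {0} = 0 from by simp [Multiset.filter_singleton]]
        simp [pairOf]
      · rw [Multiset.filter_cons_of_pos (p := fun x => 0 < x) _ ha, Multiset.filter_cons_of_neg (p := fun x => 0 < x) _ (by simp),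
          show Multiset.filter (fun x => 0 < x) {0} = 0 from by simp [Multiset.filter_singleton]]
        rw [sort_eq_of ((n-0-0) ::ₘ 0) [n - 0 - 0] rfl (by simp)]
        simp [pairOf]
    · rw [Multiset.filter_cons_of_pos (p := fun x => 0 < x) _ (by omega), Multiset.filter_cons_of_pos (p := fun x => 0 < x) _ hb,
          show Multiset.filter (fun x => 0 < x) {0} = 0 from by simp [Multiset.filter_singleton]]
      rw [sort_eq_of ((n-b-0) ::ₘ b ::ₘ 0) [n - b - 0, b] rfl (by simp [List.pairwise_cons]; omega)]
      simp [pairOf]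
  · have hb : 0 < b := lt_of_lt_of_le hc hcb
    rw [Multiset.filter_cons_of_pos (p := fun x => 0 < x) _ (by omega), Multiset.filter_cons_of_pos (p := fun x => 0 < x) _ hb,
        show Multiset.filter (fun x => 0 < x) {c} = {c} from by simp [Multiset.filter_singleton, hc]]
    rw [sort_eq_of ((n-b-c) ::ₘ b ::ₘ {c}) [n - b - c, b, c] rfl (by simp [List.pairwise_cons]; omega)]
    simp [pairOf]

def equivA (k n : ℕ) :
    {π : n.Partition // Multiset.card π.parts ≤ 3 ∧ ∀ i ∈ π.parts, i ≤ k} ≃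
    {p : ℕ × ℕ // p.2 ≤ p.1 ∧ 2*p.1 + p.2 ≤ n ∧ n ≤ k + p.1 + p.2} where
  toFun x := ⟨toPair x.1, by
    obtain ⟨h1, h2, h3, _⟩ := toPair_spec x.1 x.2.1 x.2.2
    exact ⟨h1, h2, h3⟩⟩
  invFun y := ⟨mkP n y.1.1 y.1.2 y.2.2.1, by
    obtain ⟨h1, h2, h3⟩ := y.2
    have hparts : (mkP n y.1.1 y.1.2 y.2.2.1).parts
        = Multiset.filter (fun x => 0 < x) {n - y.1.1 - y.1.2, y.1.1, y.1.2} := rfl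
    rw [hparts]
    constructor
    · exact le_trans (Multiset.card_le_card (Multiset.filter_le _ _)) (by simp)
    · intro i hi
      have hm := (Multiset.mem_filter.mp hi).1
      simp only [Multiset.insert_eq_cons, Multiset.mem_cons, Multiset.mem_singleton] at hm
      omega⟩
  left_inv x := by
    obtain ⟨h1, h2, h3, h4⟩ := toPair_spec x.1 x.2.1 x.2.2
    exact Subtype.ext (Nat.Partition.ext h4.symm)
  right_inv y := Subtype.ext (toPair_mkP n y.1.1 y.1.2 y.2.2.1 y.2.1)

lemma boxPartitions_eq (k n : ℕ) :
    boxPartitions k 3 n =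
      Nat.card {p : ℕ × ℕ // p.2 ≤ p.1 ∧ 2*p.1 + p.2 ≤ n ∧ n ≤ k + p.1 + p.2} :=
  Nat.card_congr (equivA k n)

def fB (ℓ : ℕ) (p : ℕ × ℕ) : ℕ × ℕ :=
  if 2*p.1 + p.2 ≤ 6*ℓ - 4 then p else (2*ℓ - 2 - p.2/2, p.2/2)

def gB (ℓ : ℕ) (p : ℕ × ℕ) : ℕ × ℕ :=
  if 2*ℓ - 1 ≤ p.1 + p.2 then p else (3*ℓ - 2 - p.2, 2*p.2 + 1)

def equivB (ℓ : ℕ) (hℓ : 1 ≤ ℓ) :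
    {p : ℕ × ℕ // p.2 ≤ p.1 ∧ 2*p.1 + p.2 ≤ 6*ℓ-3 ∧ 6*ℓ-3 ≤ (4*ℓ-2) + p.1 + p.2} ≃
    {p : ℕ × ℕ // p.2 ≤ p.1 ∧ 2*p.1 + p.2 ≤ 6*ℓ-4 ∧ 6*ℓ-4 ≤ (4*ℓ-2) + p.1 + p.2} where
  toFun x := ⟨fB ℓ x.1, by
    obtain ⟨⟨b, c⟩, h1, h2, h3⟩ := x
    unfold fB; dsimp only; split_ifs with h <;> dsimp only <;> omega⟩
  invFun y := ⟨gB ℓ y.1, by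
    obtain ⟨⟨b, c⟩, h1, h2, h3⟩ := y
    unfold gB; dsimp only; split_ifs with h <;> dsimp only <;> omega⟩
  left_inv x := by
    apply Subtype.ext
    obtain ⟨⟨b, c⟩, h1, h2, h3⟩ := x
    show gB ℓ (fB ℓ (b, c)) = (b, c)
    unfold fB gB
    dsimp only
    split_ifs <;> simp only [Prod.mk.injEq] <;> dsimp only at * <;> omega
  right_inv y := by
    apply Subtype.ext
    obtain ⟨⟨b, c⟩, h1, h2, h3⟩ := y
    show fB ℓ (gB ℓ (b, c)) = (b, c)
    unfold fB gB
    dsimp only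
    split_ifs <;> simp only [Prod.mk.injEq] <;> dsimp only at * <;> omega

theorem stmt_0 (ℓ : ℕ) (hℓ : 1 ≤ ℓ) :
    boxPartitions (4 * ℓ - 2) 3 (6 * ℓ - 3) = boxPartitions (4 * ℓ - 2) 3 (6 * ℓ - 4) := by
  rw [boxPartitions_eq, boxPartitions_eq]
  exact Nat.card_congr (equivB ℓ hℓ)
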